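/- arXiv:math/0605641 — 2 statements merged into one kernel-verified Lean document; each statement's English description precedes it below -/
import Mathlib

section
/- Let G = (V,E) be a finite graph, β ≥ 0 and h : V → ℝ. Then the Ising measure μ^{β,h} on {-1,+1}^V is monotone; that is, for every s ∈ V and all ξ, ξ' ∈ {-1,+1}^{V∖{s}} with ξ ≤ ξ' coordinatewise, μ^{β,h}(σ(s)=1 | σ ≡ ξ on V∖{s}) ≤ μ^{β,h}(σ(s)=1 | σ ≡ ξ' on V∖{s}). -/
/-!
Ising model on a finite graph. Spin configurations are `σ : V → Bool`, with `true`
standing for spin `+1` and `false` for spin `-1`; `spin` is the corresponding `±1` value.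
Probability measures on the finite configuration space are represented by weight functions.
-/

open Finset

/-- The `±1` value of a spin. -/
def spin (b : Bool) : ℝ := if b then 1 else -1

/-- The conditional probability `μ(σ(s) = +1 | σ ≡ ξ off s)`. -/
noncomputable def condOne {V : Type*} [DecidableEq V] [Fintype V]
    (μ : (V → Bool) → ℝ) (s : V) (ξ : V → Bool) : ℝ :=
  μ (Function.update ξ s true) /
    (μ (Function.update ξ s true) + μ (Function.update ξ s false))

/-- The interaction energy `σ(t)σ(t')` of an (unordered) edge. -/
def edgeTerm {V : Type*} (σ : V → Bool) : Sym2 V → ℝ :=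
  Sym2.lift ⟨fun a b => spin (σ a) * spin (σ b), fun a b => by ring⟩

/-- The Ising Hamiltonian `H(σ) = -β ∑_{{t,t'} ∈ E} σ(t)σ(t') - ∑_t h(t) σ(t)`. -/
noncomputable def isingH {V : Type*} [DecidableEq V] [Fintype V]
    (G : SimpleGraph V) [DecidableRel G.Adj] (β : ℝ) (h : V → ℝ) (σ : V → Bool) : ℝ :=
  -β * ∑ e ∈ G.edgeFinset, edgeTerm σ e - ∑ t : V, h t * spin (σ t)

/-- The Ising measure `μ^{β,h}(σ) = e^{-H(σ)}/Z` on `{-1,+1}^V`. -/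
noncomputable def isingWeight {V : Type*} [DecidableEq V] [Fintype V]
    (G : SimpleGraph V) [DecidableRel G.Adj] (β : ℝ) (h : V → ℝ) (σ : V → Bool) : ℝ :=
  Real.exp (-isingH G β h σ) / ∑ τ : V → Bool, Real.exp (-isingH G β h τ)

/-- `μ` is monotone: the conditional probability of a `+1` at `s` is nondecreasing in the
configuration off `s` (coordinatewise order with `-1 < +1`, i.e. `false < true`). -/
def IsMonotoneWeight {V : Type*} [DecidableEq V] [Fintype V] (μ : (V → Bool) → ℝ) : Prop :=
  ∀ s : V, ∀ ξ ξ' : V → Bool, (∀ t, t ≠ s → ξ t ≤ ξ' t) →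
    condOne μ s ξ ≤ condOne μ s ξ'

lemma spin_mono {b b' : Bool} (hb : b ≤ b') : spin b ≤ spin b' := by
  cases b <;> cases b'
  · exact le_refl _
  · norm_num [spin]
  · exact absurd hb (by decide)
  · exact le_refl _

lemma spin_true : spin true = 1 := rfl
lemma spin_false : spin false = -1 := rfl

lemma edge_ineq {V : Type*} [DecidableEq V] (s : V) (ξ ξ' : V → Bool)
    (hle : ∀ t, t ≠ s → ξ t ≤ ξ' t) (e : Sym2 V) (he : ¬ e.IsDiag) :
    edgeTerm (Function.update ξ s true) e + edgeTerm (Function.update ξ' s false) e ≤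
    edgeTerm (Function.update ξ' s true) e + edgeTerm (Function.update ξ s false) e := by
  induction e using Sym2.inductionOn with
  | hf a b =>
    have hab : a ≠ b := by simpa using he
    simp only [edgeTerm, Sym2.lift_mk]
    by_cases ha : a = s
    · subst ha
      have hb : b ≠ a := fun hh => hab hh.symm
      have hm := spin_mono (hle b hb)
      simp only [Function.update_self, Function.update_of_ne hb, spin_true, spin_false]
      linarith
    · by_cases hbs : b = s
      · subst hbs
        have hm := spin_mono (hle a ha)
        simp only [Function.update_self, Function.update_of_ne ha, spin_true, spin_false]
        linarith
      · simp only [Function.update_of_ne ha, Function.update_of_ne hbs]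
        linarith

lemma isingH_ineq {V : Type*} [DecidableEq V] [Fintype V]
    (G : SimpleGraph V) [DecidableRel G.Adj] (β : ℝ) (hβ : 0 ≤ β) (h : V → ℝ)
    (s : V) (ξ ξ' : V → Bool) (hle : ∀ t, t ≠ s → ξ t ≤ ξ' t) :
    isingH G β h (Function.update ξ' s true) + isingH G β h (Function.update ξ s false) ≤
    isingH G β h (Function.update ξ s true) + isingH G β h (Function.update ξ' s false) := by
  have hE : ∑ e ∈ G.edgeFinset, edgeTerm (Function.update ξ s true) e +
      ∑ e ∈ G.edgeFinset, edgeTerm (Function.update ξ' s false) e ≤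
      ∑ e ∈ G.edgeFinset, edgeTerm (Function.update ξ' s true) e +
      ∑ e ∈ G.edgeFinset, edgeTerm (Function.update ξ s false) e := by
    rw [← Finset.sum_add_distrib, ← Finset.sum_add_distrib]
    refine Finset.sum_le_sum fun e hei => ?_
    exact edge_ineq s ξ ξ' hle e
      (G.not_isDiag_of_mem_edgeSet (SimpleGraph.mem_edgeFinset.mp hei))
  have hT : ∑ t : V, h t * spin (Function.update ξ s true t) +
      ∑ t : V, h t * spin (Function.update ξ' s false t) =
      ∑ t : V, h t * spin (Function.update ξ' s true t) +
      ∑ t : V, h t * spin (Function.update ξ s false t) := by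
    rw [← Finset.sum_add_distrib, ← Finset.sum_add_distrib]
    refine Finset.sum_congr rfl fun t _ => ?_
    by_cases ht : t = s
    · subst ht; simp [Function.update_self]
    · simp only [Function.update_of_ne ht]; ring
  have := mul_le_mul_of_nonneg_left hE hβ
  unfold isingH
  nlinarith

theorem ising_monotone {V : Type*} [DecidableEq V] [Fintype V]
    (G : SimpleGraph V) [DecidableRel G.Adj] (β : ℝ) (hβ : 0 ≤ β) (h : V → ℝ) :
    IsMonotoneWeight (isingWeight G β h) := by
  intro s ξ ξ' hle
  have hH := isingH_ineq G β hβ h s ξ ξ' hle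
  have hZpos : 0 < ∑ τ : V → Bool, Real.exp (-isingH G β h τ) :=
    Finset.sum_pos (fun τ _ => Real.exp_pos _) ⟨fun _ => true, Finset.mem_univ _⟩
  have key : ∀ η : V → Bool, condOne (isingWeight G β h) s η =
      Real.exp (-isingH G β h (Function.update η s true)) /
        (Real.exp (-isingH G β h (Function.update η s true)) +
          Real.exp (-isingH G β h (Function.update η s false))) := by
    intro η
    unfold condOne isingWeight
    rw [← add_div, div_div_div_cancel_right₀ (ne_of_gt hZpos)]
  rw [key ξ, key ξ']
  have hap := Real.exp_pos (-isingH G β h (Function.update ξ s true))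
  have hbp := Real.exp_pos (-isingH G β h (Function.update ξ s false))
  have hap' := Real.exp_pos (-isingH G β h (Function.update ξ' s true))
  have hbp' := Real.exp_pos (-isingH G β h (Function.update ξ' s false))
  rw [div_le_div_iff₀ (by linarith) (by linarith)]
  have hkey : Real.exp (-isingH G β h (Function.update ξ s true)) *
      Real.exp (-isingH G β h (Function.update ξ' s false)) ≤
      Real.exp (-isingH G β h (Function.update ξ' s true)) *
      Real.exp (-isingH G β h (Function.update ξ s false)) := by
    rw [← Real.exp_add, ← Real.exp_add]
    exact Real.exp_le_exp.mpr (by linarith)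
  nlinarith
end

section
/- For every Δ ∈ ℕ, every β ≥ 0 and all reals h₁ < h₂, there exists ε > 0, depending only on Δ, β, h₁, h₂, such that for every finite graph G = (V,E) of maximum degree at most Δ one has μ^{β,h₁} ≼ (μ^{β,h₂})^{(-,ε)}, where μ^{β,h} denotes the Ising measure on G with constant external field h. -/
/-!
Ising model on a finite graph. Spin configurations are `σ : V → Bool`, with `true`
standing for spin `+1` and `false` for spin `-1`; `spin` is the corresponding `±1` value.
Probability measures on the finite configuration space are represented by weight functions.
-/

open Finset

/-- Stochastic domination `μ ≼ ν` for weight functions: `∑ f dμ ≤ ∑ f dν` for every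
nondecreasing `f` (coordinatewise order, with `false < true`, i.e. `-1 < +1`). -/
def Dominates {V : Type*} [DecidableEq V] [Fintype V] (μ ν : (V → Bool) → ℝ) : Prop :=
  ∀ f : (V → Bool) → ℝ, Monotone f →
    ∑ σ : V → Bool, μ σ * f σ ≤ ∑ σ : V → Bool, ν σ * f σ

/-- The weight function of `μ^{(-,ε)}`: the law of `s ↦ min (X s) (Z s)` where `X ∼ μ`
and, independently, the `Z s` are i.i.d. with `P(Z s = true) = 1 - ε`
(`true` = `+1`/`1`, `false` = `-1`/`0`). -/
noncomputable def minusEps {V : Type*} [DecidableEq V] [Fintype V] (μ : (V → Bool) → ℝ)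
    (ε : ℝ) : (V → Bool) → ℝ := fun η =>
  ∑ σ : V → Bool, μ σ *
    ∏ s : V, (if η s then (if σ s then 1 - ε else 0) else (if σ s then ε else 1))

/-! ### Auxiliary material -/

/-- The noise level used in the main theorem. -/
noncomputable def epsOf (Δ : ℕ) (β h₁ h₂ : ℝ) : ℝ :=
  (1 - Real.exp (2 * (h₁ - h₂))) / (2 * (Real.exp (2 * β * Δ + 2 * h₁) + 1))

lemma epsOf_mem (Δ : ℕ) (β h₁ h₂ : ℝ) (h12 : h₁ < h₂) :
    epsOf Δ β h₁ h₂ ∈ Set.Ioo (0 : ℝ) 1 := by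
  have hr : Real.exp (2 * (h₁ - h₂)) < 1 := by
    rw [Real.exp_lt_one_iff]; linarith
  have hr0 : 0 < Real.exp (2 * (h₁ - h₂)) := Real.exp_pos _
  have hC : 0 < Real.exp (2 * β * Δ + 2 * h₁) := Real.exp_pos _
  unfold epsOf
  constructor
  · apply div_pos <;> nlinarith
  · rw [div_lt_one (by nlinarith)]; nlinarith

lemma spin_le {a b : Bool} (h : a ≤ b) : spin a ≤ spin b := by
  cases a <;> cases b <;> first | (revert h; exact fun h => absurd h (by decide)) | norm_num [spin]

lemma spin_le_one (b : Bool) : spin b ≤ 1 := by cases b <;> simp [spin]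

section Aux

variable {V : Type} [DecidableEq V] [Fintype V]

lemma sum_split (s : V) (F : (V → Bool) → ℝ) :
    ∑ σ : V → Bool, F σ
      = ∑ σ ∈ univ.filter (fun σ : V → Bool => σ s = true),
          (F σ + F (Function.update σ s false)) := by
  rw [Finset.sum_add_distrib,
    ← Finset.sum_filter_add_sum_filter_not univ (fun σ : V → Bool => σ s = true) F]
  congr 1
  apply Finset.sum_nbij' (i := fun σ => Function.update σ s true)
    (j := fun σ => Function.update σ s false)
  · intro σ hσ
    simp only [Finset.mem_filter, Finset.mem_univ, true_and] at hσ ⊢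
    simp [Function.update_self]
  · intro σ hσ
    simp only [Finset.mem_filter, Finset.mem_univ, true_and] at hσ ⊢
    simp [Function.update_self]
  · intro σ hσ
    simp only [Finset.mem_filter, Finset.mem_univ, true_and] at hσ
    funext t
    by_cases ht : t = s
    · subst ht; simp_all
    · simp [Function.update_of_ne ht]
  · intro σ hσ
    simp only [Finset.mem_filter, Finset.mem_univ, true_and] at hσ
    funext t
    by_cases ht : t = s
    · subst ht; simp_all
    · simp [Function.update_of_ne ht]
  · intro σ hσ
    simp only [Finset.mem_filter, Finset.mem_univ, true_and] at hσ
    congr 1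
    funext t
    by_cases ht : t = s
    · subst ht; simp_all
    · simp [Function.update_of_ne ht]

lemma edge_sum_diff (G : SimpleGraph V) [DecidableRel G.Adj] (s : V) (τ : V → Bool) :
    (∑ e ∈ G.edgeFinset, edgeTerm (Function.update τ s true) e)
      - ∑ e ∈ G.edgeFinset, edgeTerm (Function.update τ s false) e
    = 2 * ∑ t ∈ G.neighborFinset s, spin (τ t) := by
  rw [← Finset.sum_sub_distrib]
  have key : ∀ e ∈ G.edgeFinset,
      edgeTerm (Function.update τ s true) e - edgeTerm (Function.update τ s false) e
      = ∑ t ∈ G.neighborFinset s, if e = s(s, t) then 2 * spin (τ t) else 0 := by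
    intro e he
    induction e with
    | h a b =>
      rw [SimpleGraph.mem_edgeFinset, SimpleGraph.mem_edgeSet] at he
      have hab : a ≠ b := he.ne
      by_cases ha : a = s
      · subst ha
        have hb : b ≠ a := fun hbs => hab hbs.symm
        have : ∀ t ∈ G.neighborFinset a,
            (if s(a, b) = s(a, t) then 2 * spin (τ t) else 0)
              = if t = b then 2 * spin (τ t) else 0 := by
          intro t _
          congr 1
          simp only [Sym2.congr_right, eq_iff_iff]
          exact ⟨fun h => h.symm, fun h => h.symm⟩
        rw [Finset.sum_congr rfl this, Finset.sum_ite_eq' (G.neighborFinset a) b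
          (fun t => 2 * spin (τ t))]
        rw [if_pos (by rwa [SimpleGraph.mem_neighborFinset])]
        simp only [edgeTerm, Sym2.lift_mk, Function.update_self, Function.update_of_ne hb, spin]
        split_ifs <;> first | contradiction | ring
      · by_cases hb : b = s
        · subst hb
          have : ∀ t ∈ G.neighborFinset b,
              (if s(a, b) = s(b, t) then 2 * spin (τ t) else 0)
                = if t = a then 2 * spin (τ t) else 0 := by
            intro t _
            congr 1
            rw [Sym2.eq_swap]
            simp only [Sym2.congr_right, eq_iff_iff]
            exact ⟨fun h => h.symm, fun h => h.symm⟩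
          rw [Finset.sum_congr rfl this, Finset.sum_ite_eq' (G.neighborFinset b) a
            (fun t => 2 * spin (τ t))]
          rw [if_pos (by rw [SimpleGraph.mem_neighborFinset]; exact he.symm)]
          simp only [edgeTerm, Sym2.lift_mk, Function.update_self, Function.update_of_ne ha, spin]
          split_ifs <;> first | contradiction | ring
        · rw [Finset.sum_eq_zero]
          · simp [edgeTerm, Function.update_of_ne ha, Function.update_of_ne hb]
          · intro t _
            rw [if_neg]
            intro hcontra
            rw [Sym2.eq_iff] at hcontra
            rcases hcontra with ⟨h1, _⟩ | ⟨_, h2⟩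
            · exact ha h1
            · exact hb h2
  rw [Finset.sum_congr rfl key, Finset.sum_comm]
  rw [Finset.mul_sum]
  apply Finset.sum_congr rfl
  intro t ht
  rw [Finset.sum_ite_eq' G.edgeFinset (s(s, t)) (fun _ => 2 * spin (τ t))]
  rw [if_pos]
  rw [SimpleGraph.mem_edgeFinset, SimpleGraph.mem_edgeSet]
  rwa [← SimpleGraph.mem_neighborFinset]

lemma isingH_update_diff (G : SimpleGraph V) [DecidableRel G.Adj] (β h : ℝ) (s : V)
    (τ : V → Bool) :
    isingH G β (fun _ => h) (Function.update τ s false)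
      - isingH G β (fun _ => h) (Function.update τ s true)
    = 2 * β * (∑ t ∈ G.neighborFinset s, spin (τ t)) + 2 * h := by
  have hedge := edge_sum_diff G s τ
  have hfield : (∑ t : V, h * spin (Function.update τ s true t))
      - ∑ t : V, h * spin (Function.update τ s false t) = 2 * h := by
    rw [← Finset.sum_sub_distrib, Finset.sum_eq_single s]
    · simp [Function.update_self, spin]; ring
    · intro t _ hts
      simp [Function.update_of_ne hts]
    · intro hs; exact absurd (Finset.mem_univ s) hs
  unfold isingH
  beta_reduce
  linear_combination β * hedge + hfield

lemma bool_inf (x y : Bool) : x ⊓ y = (x && y) := by revert x y; decide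

lemma bool_sup (x y : Bool) : x ⊔ y = (x || y) := by revert x y; decide

lemma expZ_pos (G : SimpleGraph V) [DecidableRel G.Adj] (β : ℝ) (h : V → ℝ) :
    0 < ∑ τ : V → Bool, Real.exp (-isingH G β h τ) :=
  Finset.sum_pos (fun τ _ => Real.exp_pos _) ⟨fun _ => true, Finset.mem_univ _⟩

lemma isingWeight_pos (G : SimpleGraph V) [DecidableRel G.Adj] (β : ℝ) (h : V → ℝ)
    (σ : V → Bool) : 0 < isingWeight G β h σ :=
  div_pos (Real.exp_pos _) (expZ_pos G β h)

lemma isingWeight_mass (G : SimpleGraph V) [DecidableRel G.Adj] (β : ℝ) (h : V → ℝ) :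
    ∑ σ : V → Bool, isingWeight G β h σ = 1 := by
  unfold isingWeight
  rw [← Finset.sum_div, div_self (ne_of_gt (expZ_pos G β h))]

lemma sum_prod_bool (F : V → Bool → ℝ) :
    ∑ η : V → Bool, ∏ t, F t (η t) = ∏ t, (F t true + F t false) := by
  have h := Finset.prod_univ_sum (fun _ => (univ : Finset Bool)) F
  rw [Fintype.piFinset_univ] at h
  rw [← h]
  exact Finset.prod_congr rfl fun t _ => Fintype.sum_bool _

lemma minusEps_mass (μ : (V → Bool) → ℝ) (ε : ℝ) (hμ : ∑ σ : V → Bool, μ σ = 1) :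
    ∑ η : V → Bool, minusEps μ ε η = 1 := by
  unfold minusEps
  rw [Finset.sum_comm]
  have key : ∀ σ : V → Bool, (∑ η : V → Bool, μ σ *
      ∏ t : V, (if η t then (if σ t then 1 - ε else 0) else (if σ t then ε else 1))) = μ σ := by
    intro σ
    rw [← Finset.mul_sum]
    rw [sum_prod_bool (fun t b => if b then (if σ t then 1 - ε else 0) else (if σ t then ε else 1))]
    have h1 : ∀ t : V, ((if (true:Bool) = true then (if σ t = true then 1 - ε else 0)
          else (if σ t = true then ε else 1)) +
        (if (false:Bool) = true then (if σ t = true then 1 - ε else 0)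
          else (if σ t = true then ε else 1))) = 1 := by
      intro t; by_cases h : σ t <;> simp [h]
    rw [Finset.prod_congr rfl fun t _ => h1 t, Finset.prod_const_one, mul_one]
  rw [Finset.sum_congr rfl fun σ _ => key σ, hμ]

lemma minusEps_nonneg (μ : (V → Bool) → ℝ) (ε : ℝ) (hμ : ∀ σ, 0 ≤ μ σ)
    (hε0 : 0 ≤ ε) (hε1 : ε ≤ 1) (η : V → Bool) : 0 ≤ minusEps μ ε η :=
  Finset.sum_nonneg fun σ _ => mul_nonneg (hμ σ) (Finset.prod_nonneg fun t _ => by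
    by_cases h1 : η t <;> by_cases h2 : σ t <;> simp [h1, h2] <;> linarith)

lemma minusEps_pos (μ : (V → Bool) → ℝ) (ε : ℝ) (hμ : ∀ σ, 0 < μ σ)
    (hε0 : 0 < ε) (hε1 : ε < 1) (η : V → Bool) : 0 < minusEps μ ε η := by
  have hterm : 0 < μ (fun _ => true) *
      ∏ t : V, (if η t then (if (fun _ : V => true) t then 1 - ε else 0)
        else (if (fun _ : V => true) t then ε else 1)) := by
    apply mul_pos (hμ _)
    apply Finset.prod_pos
    intro t _
    by_cases h : η t <;> simp [h] <;> linarith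
  calc (0:ℝ) < _ := hterm
    _ ≤ minusEps μ ε η := by
        apply Finset.single_le_sum (f := fun σ => μ σ *
          ∏ t : V, (if η t then (if σ t then 1 - ε else 0) else (if σ t then ε else 1)))
          (fun σ _ => mul_nonneg (hμ σ).le (Finset.prod_nonneg fun t _ => by
            by_cases h1 : η t <;> by_cases h2 : σ t <;> simp [h1, h2] <;> linarith))
          (Finset.mem_univ _)

lemma scalar_ineq (Δ : ℕ) (β : ℝ) (hβ : 0 ≤ β) (h₁ h₂ : ℝ) (h12 : h₁ < h₂)
    (S₁ S₂ : ℝ) (hS : S₁ ≤ S₂) (hSΔ : S₁ ≤ Δ) :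
    Real.exp (2 * β * S₁ + 2 * h₁) * (epsOf Δ β h₁ h₂ + Real.exp (-(2 * β * S₂ + 2 * h₂)))
      ≤ 1 - epsOf Δ β h₁ h₂ := by
  unfold epsOf
  set r := Real.exp (2 * (h₁ - h₂)) with hrdef
  set C := Real.exp (2 * β * Δ + 2 * h₁) with hCdef
  have hr1 : r < 1 := by rw [hrdef, Real.exp_lt_one_iff]; linarith
  have hr0 : 0 < r := Real.exp_pos _
  have hC0 : 0 < C := Real.exp_pos _
  set ε := (1 - r) / (2 * (C + 1)) with hεdef
  have hεpos : 0 ≤ ε := div_nonneg (by linarith) (by linarith)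
  have hE : Real.exp (2 * β * S₁ + 2 * h₁) ≤ C := by
    rw [hCdef]; apply Real.exp_le_exp.mpr; nlinarith
  have hE0 : 0 < Real.exp (2 * β * S₁ + 2 * h₁) := Real.exp_pos _
  have hprod : Real.exp (2 * β * S₁ + 2 * h₁) * Real.exp (-(2 * β * S₂ + 2 * h₂)) ≤ r := by
    rw [← Real.exp_add, hrdef]; apply Real.exp_le_exp.mpr; nlinarith
  have hεeq : ε * (C + 1) = (1 - r) / 2 := by
    rw [hεdef]; field_simp
  have h5 : Real.exp (2 * β * S₁ + 2 * h₁) * ε ≤ C * ε :=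
    mul_le_mul_of_nonneg_right hE hεpos
  nlinarith [hεeq, h5, hprod, hr1]

lemma core_ineq (Δ : ℕ) (β : ℝ) (hβ : 0 ≤ β) (h₁ h₂ : ℝ) (h12 : h₁ < h₂)
    (G : SimpleGraph V) [DecidableRel G.Adj] (hdeg : ∀ v, G.degree v ≤ Δ)
    (s : V) (ξ ρ : V → Bool) (hle : ∀ t, t ≠ s → ξ t ≤ ρ t) :
    Real.exp (-isingH G β (fun _ => h₁) (Function.update ξ s true)) *
      (epsOf Δ β h₁ h₂ * Real.exp (-isingH G β (fun _ => h₂) (Function.update ρ s true))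
        + Real.exp (-isingH G β (fun _ => h₂) (Function.update ρ s false)))
    ≤ (1 - epsOf Δ β h₁ h₂) *
        Real.exp (-isingH G β (fun _ => h₁) (Function.update ξ s false)) *
        Real.exp (-isingH G β (fun _ => h₂) (Function.update ρ s true)) := by
  set S₁ := ∑ t ∈ G.neighborFinset s, spin (ξ t) with hS₁
  set S₂ := ∑ t ∈ G.neighborFinset s, spin (ρ t) with hS₂
  have hS12 : S₁ ≤ S₂ := by
    apply Finset.sum_le_sum
    intro t ht
    rw [SimpleGraph.mem_neighborFinset] at ht
    exact spin_le (hle t (fun h => (G.ne_of_adj ht) h.symm))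
  have hS1Δ : S₁ ≤ (Δ : ℝ) := by
    calc S₁ ≤ ∑ _t ∈ G.neighborFinset s, (1:ℝ) := Finset.sum_le_sum fun t _ => spin_le_one _
      _ = (G.degree s : ℝ) := by rw [Finset.sum_const, SimpleGraph.card_neighborFinset_eq_degree]; simp
      _ ≤ (Δ : ℝ) := by exact_mod_cast hdeg s
  have d1 := isingH_update_diff G β h₁ s ξ
  have d2 := isingH_update_diff G β h₂ s ρ
  have e1 : Real.exp (-isingH G β (fun _ => h₁) (Function.update ξ s true))
      = Real.exp (-isingH G β (fun _ => h₁) (Function.update ξ s false))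
        * Real.exp (2 * β * S₁ + 2 * h₁) := by
    rw [← Real.exp_add]; congr 1; rw [← hS₁] at d1; linarith
  have e2 : Real.exp (-isingH G β (fun _ => h₂) (Function.update ρ s false))
      = Real.exp (-isingH G β (fun _ => h₂) (Function.update ρ s true))
        * Real.exp (-(2 * β * S₂ + 2 * h₂)) := by
    rw [← Real.exp_add]; congr 1; rw [← hS₂] at d2; linarith
  rw [e1, e2]
  have key := scalar_ineq Δ β hβ h₁ h₂ h12 S₁ S₂ hS12 hS1Δ
  set A := Real.exp (-isingH G β (fun _ => h₁) (Function.update ξ s false))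
  set B := Real.exp (-isingH G β (fun _ => h₂) (Function.update ρ s true))
  have hA : 0 < A := Real.exp_pos _
  have hB : 0 < B := Real.exp_pos _
  calc A * Real.exp (2 * β * S₁ + 2 * h₁) *
        (epsOf Δ β h₁ h₂ * B + B * Real.exp (-(2 * β * S₂ + 2 * h₂)))
      = (A * B) * (Real.exp (2 * β * S₁ + 2 * h₁) *
          (epsOf Δ β h₁ h₂ + Real.exp (-(2 * β * S₂ + 2 * h₂)))) := by ring
    _ ≤ (A * B) * (1 - epsOf Δ β h₁ h₂) :=
        mul_le_mul_of_nonneg_left key (le_of_lt (mul_pos hA hB))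
    _ = (1 - epsOf Δ β h₁ h₂) * A * B := by ring

lemma weights_step (a b c d Q Z₁ Z₂ ε : ℝ) (hZ₁ : 0 < Z₁) (hZ₂ : 0 < Z₂) (hQ : 0 ≤ Q)
    (core : a * (ε * c + d) ≤ (1 - ε) * b * c) :
    a / Z₁ * (c / Z₂ * (ε * Q)) + a / Z₁ * (d / Z₂ * Q)
      ≤ b / Z₁ * (c / Z₂ * ((1 - ε) * Q)) + b / Z₁ * (d / Z₂ * 0) := by
  have h := mul_le_mul_of_nonneg_right core
    (show (0:ℝ) ≤ Q / (Z₁ * Z₂) by positivity)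
  have hZ₁' : Z₁ ≠ 0 := ne_of_gt hZ₁
  have hZ₂' : Z₂ ≠ 0 := ne_of_gt hZ₂
  calc a / Z₁ * (c / Z₂ * (ε * Q)) + a / Z₁ * (d / Z₂ * Q)
      = (a * (ε * c + d)) * (Q / (Z₁ * Z₂)) := by field_simp
    _ ≤ ((1 - ε) * b * c) * (Q / (Z₁ * Z₂)) := h
    _ = b / Z₁ * (c / Z₂ * ((1 - ε) * Q)) + b / Z₁ * (d / Z₂ * 0) := by field_simp; ring

lemma cross_ineq (Δ : ℕ) (β : ℝ) (hβ : 0 ≤ β) (h₁ h₂ : ℝ) (h12 : h₁ < h₂)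
    (G : SimpleGraph V) [DecidableRel G.Adj] (hdeg : ∀ v, G.degree v ≤ Δ)
    (s : V) (ξ ζ : V → Bool) (hle : ∀ t, t ≠ s → ξ t ≤ ζ t) :
    isingWeight G β (fun _ => h₁) (Function.update ξ s true)
      * minusEps (isingWeight G β fun _ => h₂) (epsOf Δ β h₁ h₂) (Function.update ζ s false)
    ≤ isingWeight G β (fun _ => h₁) (Function.update ξ s false)
      * minusEps (isingWeight G β fun _ => h₂) (epsOf Δ β h₁ h₂) (Function.update ζ s true) := by
  obtain ⟨hε0, hε1⟩ := epsOf_mem Δ β h₁ h₂ h12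
  set ε := epsOf Δ β h₁ h₂ with hεdef
  unfold minusEps
  rw [Finset.mul_sum, Finset.mul_sum, sum_split s, sum_split s]
  apply Finset.sum_le_sum
  intro σ hσ
  rw [Finset.mem_filter] at hσ
  have hσs : σ s = true := hσ.2
  set Q := ∏ t ∈ univ.erase s,
    (if ζ t then (if σ t then 1 - ε else 0) else (if σ t then ε else 1)) with hQdef
  have factor_nonneg : ∀ (η τ : V → Bool) (t : V),
      0 ≤ (if η t then (if τ t then 1 - ε else 0) else (if τ t then ε else 1)) := by
    intro η τ t
    by_cases hx : η t <;> by_cases hy : τ t <;> simp [hx, hy] <;> linarith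
  have hQ0 : 0 ≤ Q := Finset.prod_nonneg fun t _ => factor_nonneg ζ σ t
  -- rewrite the four products
  have e1 : (∏ t : V, (if Function.update ζ s false t
        then (if σ t then 1 - ε else 0) else (if σ t then ε else 1))) = ε * Q := by
    rw [← Finset.mul_prod_erase univ _ (Finset.mem_univ s)]
    congr 1
    · simp [Function.update_self, hσs]
    · apply Finset.prod_congr rfl
      intro t ht
      rw [Function.update_of_ne (Finset.ne_of_mem_erase ht)]
  have e2 : (∏ t : V, (if Function.update ζ s false t
        then (if Function.update σ s false t then 1 - ε else 0)
        else (if Function.update σ s false t then ε else 1))) = 1 * Q := by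
    rw [← Finset.mul_prod_erase univ _ (Finset.mem_univ s)]
    congr 1
    · simp [Function.update_self]
    · apply Finset.prod_congr rfl
      intro t ht
      rw [Function.update_of_ne (Finset.ne_of_mem_erase ht),
        Function.update_of_ne (Finset.ne_of_mem_erase ht)]
  have e3 : (∏ t : V, (if Function.update ζ s true t
        then (if σ t then 1 - ε else 0) else (if σ t then ε else 1))) = (1 - ε) * Q := by
    rw [← Finset.mul_prod_erase univ _ (Finset.mem_univ s)]
    congr 1
    · simp [Function.update_self, hσs]
    · apply Finset.prod_congr rfl
      intro t ht
      rw [Function.update_of_ne (Finset.ne_of_mem_erase ht)]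
  have e4 : (∏ t : V, (if Function.update ζ s true t
        then (if Function.update σ s false t then 1 - ε else 0)
        else (if Function.update σ s false t then ε else 1))) = 0 := by
    apply Finset.prod_eq_zero (Finset.mem_univ s)
    simp [Function.update_self]
  rw [e1, e2, e3, e4]
  rcases eq_or_lt_of_le hQ0 with hQ | hQ
  · rw [← hQ]
    simp
  · -- Q > 0 : every site t ≠ s with ζ t = true has σ t = true
    have hσζ : ∀ t, t ≠ s → ξ t ≤ σ t := by
      intro t hts
      by_cases hz : ζ t
      · have hσt : σ t = true := by
          by_contra hσt
          have hzero : (if ζ t then (if σ t then 1 - ε else 0)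
              else (if σ t then ε else 1)) = 0 := by
            simp [hz, hσt]
          have : Q = 0 := Finset.prod_eq_zero
            (Finset.mem_erase.mpr ⟨hts, Finset.mem_univ t⟩) hzero
          rw [this] at hQ; exact lt_irrefl _ hQ
        rw [hσt]
        exact le_top
      · have : ξ t = false := by
          have h := hle t hts
          rw [Bool.not_eq_true] at hz
          rw [hz] at h
          exact le_antisymm h (Bool.false_le _)
        rw [this]
        exact Bool.false_le _
    have core := core_ineq Δ β hβ h₁ h₂ h12 G hdeg s ξ σ hσζ
    rw [← hεdef] at core
    have hZ1 := expZ_pos G β (fun _ => h₁)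
    have hZ2 := expZ_pos G β (fun _ => h₂)
    have goal0 : isingWeight G β (fun _ => h₁) (Function.update ξ s true)
        * (isingWeight G β (fun _ => h₂) σ * (ε * Q))
      + isingWeight G β (fun _ => h₁) (Function.update ξ s true)
        * (isingWeight G β (fun _ => h₂) (Function.update σ s false) * (1 * Q))
      ≤ isingWeight G β (fun _ => h₁) (Function.update ξ s false)
        * (isingWeight G β (fun _ => h₂) σ * ((1 - ε) * Q))
      + isingWeight G β (fun _ => h₁) (Function.update ξ s false)
        * (isingWeight G β (fun _ => h₂) (Function.update σ s false) * 0) := by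
      unfold isingWeight
      rw [one_mul]
      have hσup : Function.update σ s true = σ := by
        rw [Function.update_eq_self_iff]; exact hσs.symm
      have := weights_step
        (Real.exp (-isingH G β (fun _ => h₁) (Function.update ξ s true)))
        (Real.exp (-isingH G β (fun _ => h₁) (Function.update ξ s false)))
        (Real.exp (-isingH G β (fun _ => h₂) σ))
        (Real.exp (-isingH G β (fun _ => h₂) (Function.update σ s false)))
        Q (∑ τ : V → Bool, Real.exp (-isingH G β (fun _ => h₁) τ))
        (∑ τ : V → Bool, Real.exp (-isingH G β (fun _ => h₂) τ))
        ε hZ1 hZ2 hQ0 (by rw [hσup] at core; exact core)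
      exact this
    exact goal0

lemma telescope (Δ : ℕ) (β : ℝ) (hβ : 0 ≤ β) (h₁ h₂ : ℝ) (h12 : h₁ < h₂)
    (G : SimpleGraph V) [DecidableRel G.Adj] (hdeg : ∀ v, G.degree v ≤ Δ)
    (D : Finset V) :
    ∀ ξ ζ : V → Bool, ξ ≤ ζ → (∀ u ∈ D, ζ u = false) →
      isingWeight G β (fun _ => h₁) (fun t => ξ t || decide (t ∈ D))
        * minusEps (isingWeight G β fun _ => h₂) (epsOf Δ β h₁ h₂) ζ
      ≤ isingWeight G β (fun _ => h₁) ξ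
        * minusEps (isingWeight G β fun _ => h₂) (epsOf Δ β h₁ h₂) (fun t => ζ t || decide (t ∈ D)) := by
  obtain ⟨hε0, hε1⟩ := epsOf_mem Δ β h₁ h₂ h12
  induction D using Finset.induction_on with
  | empty =>
    intro ξ ζ hξζ _
    have h1 : (fun t => ξ t || decide (t ∈ (∅ : Finset V))) = ξ := by
      funext t; simp
    have h2 : (fun t => ζ t || decide (t ∈ (∅ : Finset V))) = ζ := by
      funext t; simp
    rw [h1, h2]
  | @insert x D hx ih =>
    intro ξ ζ hξζ hz
    have hζx : ζ x = false := hz x (Finset.mem_insert_self x D)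
    have hξx : ξ x = false := by
      have h := hξζ x
      rw [hζx] at h
      exact le_antisymm h (Bool.false_le _)
    set ξ' := Function.update ξ x true with hξ'def
    set ζ' := Function.update ζ x true with hζ'def
    have hξ'ζ' : ξ' ≤ ζ' := by
      intro t
      by_cases ht : t = x
      · subst ht; simp [hξ'def, hζ'def, Function.update_self]
      · simp only [hξ'def, hζ'def, Function.update_of_ne ht]
        exact hξζ t
    have hz' : ∀ u ∈ D, ζ' u = false := by
      intro u hu
      rw [hζ'def, Function.update_of_ne (show u ≠ x from fun h => hx (by rwa [h] at hu))]
      exact hz u (Finset.mem_insert_of_mem hu)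
    have IH := ih ξ' ζ' hξ'ζ' hz'
    have eqξ : (fun t => ξ' t || decide (t ∈ D)) = (fun t => ξ t || decide (t ∈ insert x D)) := by
      funext t
      by_cases ht : t = x
      · subst ht
        simp [hξ'def, Function.update_self, Finset.mem_insert_self]
      · simp [hξ'def, Function.update_of_ne ht, Finset.mem_insert, ht]
    have eqζ : (fun t => ζ' t || decide (t ∈ D)) = (fun t => ζ t || decide (t ∈ insert x D)) := by
      funext t
      by_cases ht : t = x
      · subst ht
        simp [hζ'def, Function.update_self, Finset.mem_insert_self]
      · simp [hζ'def, Function.update_of_ne ht, Finset.mem_insert, ht]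
    rw [eqξ, eqζ] at IH
    have cross := cross_ineq Δ β hβ h₁ h₂ h12 G hdeg x ξ ζ (fun t _ => hξζ t)
    have uξ : Function.update ξ x false = ξ := by
      rw [Function.update_eq_self_iff]; exact hξx.symm
    have uζ : Function.update ζ x false = ζ := by
      rw [Function.update_eq_self_iff]; exact hζx.symm
    rw [uξ, uζ] at cross
    -- cross : w₁ ξ' * ν ζ ≤ w₁ ξ * ν ζ'
    have pw : 0 < isingWeight G β (fun _ => h₁) ξ' := isingWeight_pos G β _ _
    have pν : 0 < minusEps (isingWeight G β fun _ => h₂) (epsOf Δ β h₁ h₂) ζ' :=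
      minusEps_pos _ _ (fun σ => isingWeight_pos G β _ σ) hε0 hε1 ζ'
    have pw2 : 0 < isingWeight G β (fun _ => h₁) (fun t => ξ t || decide (t ∈ insert x D)) :=
      isingWeight_pos G β _ _
    have pν2 : 0 < minusEps (isingWeight G β fun _ => h₂) (epsOf Δ β h₁ h₂)
        (fun t => ζ t || decide (t ∈ insert x D)) :=
      minusEps_pos _ _ (fun σ => isingWeight_pos G β _ σ) hε0 hε1 _
    have pνζ : 0 < minusEps (isingWeight G β fun _ => h₂) (epsOf Δ β h₁ h₂) ζ :=
      minusEps_pos _ _ (fun σ => isingWeight_pos G β _ σ) hε0 hε1 ζ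
    have pwξ : 0 < isingWeight G β (fun _ => h₁) ξ := isingWeight_pos G β _ _
    rw [← mul_le_mul_iff_of_pos_right (mul_pos pw pν)]
    calc isingWeight G β (fun _ => h₁) (fun t => ξ t || decide (t ∈ insert x D))
          * minusEps (isingWeight G β fun _ => h₂) (epsOf Δ β h₁ h₂) ζ
          * (isingWeight G β (fun _ => h₁) ξ'
            * minusEps (isingWeight G β fun _ => h₂) (epsOf Δ β h₁ h₂) ζ')
        = (isingWeight G β (fun _ => h₁) (fun t => ξ t || decide (t ∈ insert x D))
            * minusEps (isingWeight G β fun _ => h₂) (epsOf Δ β h₁ h₂) ζ')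
          * (isingWeight G β (fun _ => h₁) ξ'
            * minusEps (isingWeight G β fun _ => h₂) (epsOf Δ β h₁ h₂) ζ) := by ring
      _ ≤ (isingWeight G β (fun _ => h₁) ξ'
            * minusEps (isingWeight G β fun _ => h₂) (epsOf Δ β h₁ h₂)
              (fun t => ζ t || decide (t ∈ insert x D)))
          * (isingWeight G β (fun _ => h₁) ξ
            * minusEps (isingWeight G β fun _ => h₂) (epsOf Δ β h₁ h₂) ζ') :=
          mul_le_mul IH cross (le_of_lt (mul_pos pw pνζ))
            (le_of_lt (mul_pos pw pν2))
      _ = isingWeight G β (fun _ => h₁) ξ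
          * minusEps (isingWeight G β fun _ => h₂) (epsOf Δ β h₁ h₂)
            (fun t => ζ t || decide (t ∈ insert x D))
          * (isingWeight G β (fun _ => h₁) ξ'
            * minusEps (isingWeight G β fun _ => h₂) (epsOf Δ β h₁ h₂) ζ') := by ring

lemma lattice_cond (Δ : ℕ) (β : ℝ) (hβ : 0 ≤ β) (h₁ h₂ : ℝ) (h12 : h₁ < h₂)
    (G : SimpleGraph V) [DecidableRel G.Adj] (hdeg : ∀ v, G.degree v ≤ Δ)
    (a b : V → Bool) :
    isingWeight G β (fun _ => h₁) a
      * minusEps (isingWeight G β fun _ => h₂) (epsOf Δ β h₁ h₂) b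
    ≤ isingWeight G β (fun _ => h₁) (a ⊓ b)
      * minusEps (isingWeight G β fun _ => h₂) (epsOf Δ β h₁ h₂) (a ⊔ b) := by
  classical
  set D : Finset V := univ.filter (fun t => a t = true ∧ b t = false) with hDdef
  have hD : ∀ t, t ∈ D ↔ (a t = true ∧ b t = false) := by
    intro t; simp [hDdef]
  have key := telescope Δ β hβ h₁ h₂ h12 G hdeg D (a ⊓ b) b inf_le_right
    (fun u hu => ((hD u).mp hu).2)
  have e1 : (fun t => (a ⊓ b) t || decide (t ∈ D)) = a := by
    funext t
    by_cases hat : a t = true <;> by_cases hbt : b t = false <;>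
      simp [Pi.inf_apply, bool_inf, hD, hat, hbt] <;> simp_all
  have e2 : (fun t => b t || decide (t ∈ D)) = a ⊔ b := by
    funext t
    by_cases hat : a t = true <;> by_cases hbt : b t = false <;>
      simp [Pi.sup_apply, bool_sup, hD, hat, hbt] <;> simp_all
  rw [e1, e2] at key
  exact key

end Aux

theorem ising_downward_movable (Δ : ℕ) (β : ℝ) (hβ : 0 ≤ β) (h₁ h₂ : ℝ) (h12 : h₁ < h₂) :
    ∃ ε ∈ Set.Ioo (0 : ℝ) 1, ∀ (V : Type) [DecidableEq V] [Fintype V]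
      (G : SimpleGraph V) [DecidableRel G.Adj], (∀ v : V, G.degree v ≤ Δ) →
        Dominates (isingWeight G β fun _ => h₁) (minusEps (isingWeight G β fun _ => h₂) ε) := by
  refine ⟨epsOf Δ β h₁ h₂, epsOf_mem Δ β h₁ h₂ h12, ?_⟩
  intro V _ _ G _ hdeg f hf
  obtain ⟨hε0, hε1⟩ := epsOf_mem Δ β h₁ h₂ h12
  have hw1mass := isingWeight_mass G β (fun _ => h₁)
  have hνmass := minusEps_mass (isingWeight G β fun _ => h₂) (epsOf Δ β h₁ h₂)
    (isingWeight_mass G β _)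
  set c := f (fun _ => false) with hc
  have hcle : ∀ σ, c ≤ f σ := fun σ => hf (fun t => Bool.false_le _)
  have hol := holley (μ := fun σ => f σ - c)
    (f := isingWeight G β fun _ => h₁)
    (g := minusEps (isingWeight G β fun _ => h₂) (epsOf Δ β h₁ h₂))
    (fun σ => sub_nonneg.mpr (hcle σ))
    (fun σ => (isingWeight_pos G β _ σ).le)
    (fun σ => minusEps_nonneg _ _ (fun τ => (isingWeight_pos G β _ τ).le) hε0.le hε1.le σ)
    (fun σ τ hστ => by simpa using sub_le_sub_right (hf hστ) c)
    (by rw [hw1mass, hνmass])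
    (fun a b => lattice_cond Δ β hβ h₁ h₂ h12 G hdeg a b)
  have expand1 : ∑ σ : V → Bool, isingWeight G β (fun _ => h₁) σ * f σ
      = (∑ σ : V → Bool, (f σ - c) * isingWeight G β (fun _ => h₁) σ) + c := by
    have h0 : ∀ σ : V → Bool, isingWeight G β (fun _ => h₁) σ * f σ
        = (f σ - c) * isingWeight G β (fun _ => h₁) σ + c * isingWeight G β (fun _ => h₁) σ :=
      fun σ => by ring
    rw [Finset.sum_congr rfl (fun σ _ => h0 σ), Finset.sum_add_distrib, ← Finset.mul_sum,
      hw1mass, mul_one]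
  have expand2 : ∑ σ : V → Bool, minusEps (isingWeight G β fun _ => h₂) (epsOf Δ β h₁ h₂) σ * f σ
      = (∑ σ : V → Bool,
          (f σ - c) * minusEps (isingWeight G β fun _ => h₂) (epsOf Δ β h₁ h₂) σ) + c := by
    have h0 : ∀ σ : V → Bool,
        minusEps (isingWeight G β fun _ => h₂) (epsOf Δ β h₁ h₂) σ * f σ
        = (f σ - c) * minusEps (isingWeight G β fun _ => h₂) (epsOf Δ β h₁ h₂) σ
          + c * minusEps (isingWeight G β fun _ => h₂) (epsOf Δ β h₁ h₂) σ :=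
      fun σ => by ring
    rw [Finset.sum_congr rfl (fun σ _ => h0 σ), Finset.sum_add_distrib, ← Finset.mul_sum,
      hνmass, mul_one]
  rw [expand1, expand2]
  have hol' : ∑ σ : V → Bool, (f σ - c) * isingWeight G β (fun _ => h₁) σ
      ≤ ∑ σ : V → Bool,
          (f σ - c) * minusEps (isingWeight G β fun _ => h₂) (epsOf Δ β h₁ h₂) σ := hol
  linarith
end
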